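/- For every natural number n ≥ 3, letting C_n := 2·n·sin(π/n) be the perimeter of a regular n-gon inscribed in a unit circle, we have 2·π > C_{2n} + (1/3)·(C_{2n} − C_n). -/

import Mathlib

open Real Set

lemma snell_key {x : ℝ} (hx : 0 < x) (hx6 : x ≤ π / 6) :
    6 * x > 8 * Real.sin x - Real.sin (2 * x) := by
  set f : ℝ → ℝ := fun y => 6 * y - 8 * Real.sin y + Real.sin (2 * y) with hf
  have hmono : StrictMonoOn f (Icc 0 (π / 6)) := by
    apply strictMonoOn_of_deriv_pos (convex_Icc _ _)
    · fun_prop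
    · intro y hy
      rw [interior_Icc] at hy
      have hd : HasDerivAt f (6 - 8 * Real.cos y + Real.cos (2 * y) * 2) y := by
        have h1 : HasDerivAt Real.sin (Real.cos y) y := Real.hasDerivAt_sin y
        have h2 : HasDerivAt (fun z : ℝ => Real.sin (2 * z)) (Real.cos (2 * y) * 2) y := by
          have h := (Real.hasDerivAt_sin (2*y)).comp y ((hasDerivAt_id y).const_mul 2)
          simp only [mul_one] at h
          exact h
        have h := (((hasDerivAt_id y).const_mul 6).sub (h1.const_mul 8)).add h2
        simp only [mul_one] at h
        exact h
      rw [hd.deriv]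
      have hcos : Real.cos y < 1 := by
        have := Real.strictAntiOn_cos (by simp [Real.pi_pos.le] : (0:ℝ) ∈ Icc 0 π)
          (⟨hy.1.le, by nlinarith [Real.pi_pos, hy.2]⟩ : y ∈ Icc 0 π) hy.1
        simpa using this
      have h2c := Real.cos_two_mul y
      nlinarith [Real.cos_le_one y]
  have h0 : f 0 = 0 := by simp [hf]
  have := hmono (⟨le_refl 0, by positivity⟩ : (0:ℝ) ∈ Icc 0 (π/6)) ⟨hx.le, hx6⟩ hx
  rw [h0] at this
  simp only [hf] at this
  linarith

theorem snell_perimeter_extrapolation (n : ℕ) (hn : 3 ≤ n) :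
    2 * Real.pi >
      (2 * (2 * n) * Real.sin (Real.pi / (2 * n))) +
        (1 / 3) * ((2 * (2 * n) * Real.sin (Real.pi / (2 * n))) -
          (2 * n * Real.sin (Real.pi / n))) := by
  have hn0 : (0:ℝ) < n := by positivity
  set x : ℝ := π / (2 * n) with hxdef
  have hx : 0 < x := by positivity
  have hx6 : x ≤ π / 6 := by
    rw [hxdef]
    apply div_le_div_of_nonneg_left Real.pi_pos.le (by norm_num)
    have : (3:ℝ) ≤ n := by exact_mod_cast hn
    linarith
  have h2x : π / n = 2 * x := by
    rw [hxdef]; field_simp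
  have hpix : 2 * π = 4 * n * x := by
    rw [hxdef]; field_simp; ring
  have key := snell_key hx hx6
  rw [h2x, hpix]
  nlinarith [key, hn0]
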